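/- Let φ: ℝ^N → (−∞,+∞] be the negative Burg entropy φ(x) = −∑ᵢ ln(ξᵢ) for x = (ξᵢ) with all ξᵢ > 0 and +∞ otherwise. For x ∈ (0,∞)^N, u* = (μᵢ*) ∈ (−∞,0)^N, and γ > 0, it holds that L_φ(x,u*) = −N − ∑ᵢ (ln(−ξᵢμᵢ*) + ξᵢμᵢ*) and L_φ(x,u*) ≥ ∑ᵢ γ|1 + ξᵢμᵢ*|² / ((1+γ)(1 − γξᵢμᵢ*)). -/

import Mathlib

open scoped RealInnerProductSpace
attribute [local instance] Classical.propDecidable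

/-- The Fenchel conjugate on Euclidean space. -/
noncomputable def fconjE {N : ℕ} (f : EuclideanSpace ℝ (Fin N) → EReal)
    (u : EuclideanSpace ℝ (Fin N)) : EReal :=
  ⨆ y : EuclideanSpace ℝ (Fin N), (((⟪y, u⟫ : ℝ) : EReal) - f y)

/-- The negative Burg entropy on `ℝ^N`. -/
noncomputable def burg (N : ℕ) : EuclideanSpace ℝ (Fin N) → EReal := fun y =>
  if ∀ i, 0 < y i then (((-∑ i, Real.log (y i)) : ℝ) : EReal) else ⊤

lemma inner_sum' {N : ℕ} (x u : EuclideanSpace ℝ (Fin N)) :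
    (⟪x, u⟫ : ℝ) = ∑ i, x i * u i := by
  simp [PiLp.inner_apply, RCLike.inner_apply]
  exact Finset.sum_congr rfl (fun i _ => mul_comm _ _)

lemma term_upper (a b : ℝ) (ha : 0 < a) (hb : b < 0) :
    a * b + Real.log a ≤ -1 - Real.log (-b) := by
  have h := Real.log_le_sub_one_of_pos (mul_pos ha (neg_pos.mpr hb))
  rw [Real.log_mul (ne_of_gt ha) (by linarith)] at h
  nlinarith [h]

lemma term_bound (t γ : ℝ) (ht : t < 0) (hγ : 0 < γ) :
    γ * (1 + t) ^ 2 / ((1 + γ) * (1 - γ * t)) ≤ -1 - (Real.log (-t) + t) := by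
  set s := -t with hs
  have hspos : 0 < s := by simp [hs]; linarith
  have hγ1 : (0:ℝ) < 1 + γ := by linarith
  have hγs : (0:ℝ) < 1 + γ * s := by positivity
  have ha : (0:ℝ) < (1 + γ * s) / (1 + γ) := by positivity
  have h1 : Real.log ((1 + γ * s) / (1 + γ)) ≤ (1 + γ * s) / (1 + γ) - 1 :=
    Real.log_le_sub_one_of_pos ha
  have h2 : Real.log (s / ((1 + γ * s) / (1 + γ))) ≤ s / ((1 + γ * s) / (1 + γ)) - 1 :=
    Real.log_le_sub_one_of_pos (by positivity)
  have h3 : Real.log s = Real.log ((1 + γ * s) / (1 + γ))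
      + Real.log (s / ((1 + γ * s) / (1 + γ))) := by
    rw [← Real.log_mul (by positivity) (by positivity)]
    congr 1
    field_simp
  have key : γ * (1 + t) ^ 2 / ((1 + γ) * (1 - γ * t))
      = s + 1 - (1 + γ * s) / (1 + γ) - s / ((1 + γ * s) / (1 + γ)) := by
    rw [show (1:ℝ) + t = 1 - s by rw [hs]; ring, show (1:ℝ) - γ * t = 1 + γ * s by rw [hs]; ring]
    field_simp
    ring
  have : Real.log s ≤ (1 + γ * s) / (1 + γ) - 1 + (s / ((1 + γ * s) / (1 + γ)) - 1) := by
    rw [h3]; linarith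
  have ht' : -1 - (Real.log (-t) + t) = s - 1 - Real.log s := by rw [hs]; ring
  rw [ht', key]; linarith

lemma fconjE_burg (N : ℕ) (u : EuclideanSpace ℝ (Fin N)) (hu : ∀ i, u i < 0) :
    fconjE (burg N) u = (((-(N:ℝ) - ∑ i, Real.log (-u i)) : ℝ) : EReal) := by
  apply le_antisymm
  · apply iSup_le
    intro y
    by_cases h : ∀ i, 0 < y i
    · show (((⟪y, u⟫ : ℝ) : EReal) - burg N y) ≤ _
      rw [show burg N y = (((-∑ i, Real.log (y i)) : ℝ) : EReal) by rw [burg, if_pos h],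
        ← EReal.coe_sub, EReal.coe_le_coe_iff, inner_sum']
      have : ∀ i ∈ Finset.univ, y i * u i + Real.log (y i) ≤ -1 - Real.log (-u i) :=
        fun i _ => term_upper (y i) (u i) (h i) (hu i)
      have hsum := Finset.sum_le_sum this
      rw [Finset.sum_add_distrib, Finset.sum_sub_distrib] at hsum
      simp only [Finset.sum_const, Finset.card_univ, Fintype.card_fin, nsmul_eq_mul,
        mul_neg_one] at hsum
      linarith
    · show (((⟪y, u⟫ : ℝ) : EReal) - burg N y) ≤ _
      rw [show burg N y = ⊤ by rw [burg, if_neg h], EReal.sub_top]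
      exact bot_le
  · set y₀ : EuclideanSpace ℝ (Fin N) := WithLp.toLp 2 (fun i => -(u i)⁻¹) with hy₀
    have hy₀pos : ∀ i, 0 < y₀ i := fun i => by
      have := hu i
      simp only [hy₀, WithLp.ofLp_toLp, ← inv_neg]
      exact inv_pos.mpr (by linarith)
    have hb : burg N y₀ = (((-∑ i, Real.log (y₀ i)) : ℝ) : EReal) := by
      rw [burg, if_pos hy₀pos]
    have hlog : ∀ i, Real.log (y₀ i) = -Real.log (-u i) := fun i => by
      have : y₀ i = (-u i)⁻¹ := by simp [hy₀, inv_neg]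
      rw [this, Real.log_inv]
    have hiy : (⟪y₀, u⟫ : ℝ) = -(N:ℝ) := by
      rw [inner_sum']
      have : ∀ i, y₀ i * u i = -1 := fun i => by
        have := (hu i).ne
        simp only [hy₀, WithLp.ofLp_toLp]
        field_simp
      simp [this]
    refine le_iSup_of_le y₀ ?_
    rw [hb, ← EReal.coe_sub, EReal.coe_le_coe_iff, hiy]
    simp only [hlog, Finset.sum_neg_distrib]
    ring_nf
    linarith [le_refl (0:ℝ)]

/-- For the negative Burg entropy `φ`, `x ∈ (0,∞)^N`, `u* ∈ (−∞,0)^N` and `γ > 0`: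
`L_φ(x,u*) = −N − ∑ᵢ (ln(−ξᵢμᵢ*) + ξᵢμᵢ*)` and
`L_φ(x,u*) ≥ ∑ᵢ γ(1+ξᵢμᵢ*)²/((1+γ)(1−γξᵢμᵢ*))`. -/
theorem burg_fenchelYoung_formula_and_bound
    (N : ℕ) (x u : EuclideanSpace ℝ (Fin N)) (γ : ℝ)
    (hx : ∀ i, 0 < x i) (hu : ∀ i, u i < 0) (hγ : 0 < γ) :
    burg N x + fconjE (burg N) u - ((⟪x, u⟫ : ℝ) : EReal)
        = (((-(N : ℝ) - ∑ i, (Real.log (-(x i * u i)) + x i * u i)) : ℝ) : EReal)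
    ∧ (((∑ i, γ * (1 + x i * u i) ^ 2 / ((1 + γ) * (1 - γ * (x i * u i)))) : ℝ) : EReal)
        ≤ burg N x + fconjE (burg N) u - ((⟪x, u⟫ : ℝ) : EReal) := by
  have hf : burg N x = (((-∑ i, Real.log (x i)) : ℝ) : EReal) := by rw [burg, if_pos hx]
  have hc := fconjE_burg N u hu
  have hlog : ∀ i, Real.log (-(x i * u i)) = Real.log (x i) + Real.log (-u i) := fun i => by
    rw [show -(x i * u i) = x i * (-u i) by ring,
      Real.log_mul (ne_of_gt (hx i)) (neg_ne_zero.mpr (hu i).ne)]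
  have heq : burg N x + fconjE (burg N) u - ((⟪x, u⟫ : ℝ) : EReal)
      = (((-(N : ℝ) - ∑ i, (Real.log (-(x i * u i)) + x i * u i)) : ℝ) : EReal) := by
    rw [hf, hc, ← EReal.coe_add, ← EReal.coe_sub, EReal.coe_eq_coe_iff]
    simp only [hlog, Finset.sum_add_distrib, inner_sum']
    ring
  refine ⟨heq, ?_⟩
  rw [heq, EReal.coe_le_coe_iff]
  have hsum : ∀ i ∈ Finset.univ,
      γ * (1 + x i * u i) ^ 2 / ((1 + γ) * (1 - γ * (x i * u i)))
        ≤ -1 - (Real.log (-(x i * u i)) + x i * u i) := fun i _ =>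
    term_bound (x i * u i) γ (mul_neg_of_pos_of_neg (hx i) (hu i)) hγ
  have := Finset.sum_le_sum hsum
  rw [Finset.sum_sub_distrib] at this
  simp only [Finset.sum_const, Finset.card_univ, Fintype.card_fin, nsmul_eq_mul,
    mul_neg_one] at this
  linarith
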